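/- Let X be the vertex tree-shift determined by n×n 0-1 matrices A_0 and A_1 whose graph representation is essential. If A_0 is irreducible and A_1 ≥ A_0 entrywise, or A_1 is irreducible and A_0 ≥ A_1 entrywise, then X is irreducible. -/
import Mathlib


/-!  Tree-shifts on the binary tree: basic definitions. -/

/-- An infinite tree over alphabet `A`: a labeling of all finite words over
`Σ = {0,1}` (encoded as `List Bool`). -/
abbrev InfTree (A : Type*) : Type _ := List Bool → A

/-- The shift map `σ_w`: `(σ_w t)_x = t_{wx}`. -/
def treeShift {A : Type*} (w : List Bool) (t : InfTree A) : InfTree A :=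
  fun x => t (w ++ x)

/-- A pattern: a labeling of a finite prefix-closed set of words. -/
structure TreePattern (A : Type*) where
  supp : Finset (List Bool)
  prefixClosed : ∀ x ∈ supp, ∀ y : List Bool, y <+: x → y ∈ supp
  label : (x : List Bool) → x ∈ supp → A

/-- The pattern `p` occurs in the tree `t` rooted at the node `x`. -/
def TreePattern.occursAt {A : Type*} (p : TreePattern A) (t : InfTree A) (x : List Bool) : Prop :=
  ∀ y (hy : y ∈ p.supp), p.label y hy = t (x ++ y)

/-- The tree-shift `X_F` defined by a set `F` of forbidden patterns. -/
def treeShiftOf {A : Type*} (F : Set (TreePattern A)) : Set (InfTree A) :=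
  { t | ∀ p ∈ F, ∀ x : List Bool, ¬ p.occursAt t x }

/-- A subset of trees is a tree-shift if it is `X_F` for some forbidden set `F`. -/
def IsTreeShift {A : Type*} (X : Set (InfTree A)) : Prop :=
  ∃ F : Set (TreePattern A), X = treeShiftOf F

/-- A tree-shift of finite type: `X_F` for some finite forbidden set `F`. -/
def IsTSFT {A : Type*} (X : Set (InfTree A)) : Prop :=
  ∃ F : Set (TreePattern A), F.Finite ∧ X = treeShiftOf F

/-- A Markov tree-shift: `X_F` for a finite forbidden set `F` consisting of 2-blocks,
i.e. patterns with support `Σ_1 = {ε, 0, 1}`. -/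
def IsMarkovTS {A : Type*} (X : Set (InfTree A)) : Prop :=
  ∃ F : Set (TreePattern A), F.Finite ∧
    (∀ p ∈ F, p.supp = ({[], [false], [true]} : Finset (List Bool))) ∧
    X = treeShiftOf F

/-- The `n`-block of `t` rooted at `x` equals `u`; an `n`-block is recorded as a function
on all words, only its values on words of length `< n` (i.e. on `Σ_{n-1}`) are relevant. -/
def blockEqAt {A : Type*} (t : InfTree A) (x : List Bool) (n : ℕ) (u : List Bool → A) : Prop :=
  ∀ y : List Bool, y.length < n → t (x ++ y) = u y

/-- `u ∈ B_n(X)` : the `n`-block `u` appears in some tree of `X`. -/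
def memBlocks {A : Type*} (X : Set (InfTree A)) (n : ℕ) (u : List Bool → A) : Prop :=
  ∃ t ∈ X, ∃ x : List Bool, blockEqAt t x n u

/-- The maximal length `|P|` of a word in a finite set of words `P`. -/
def maxLen (P : Finset (List Bool)) : ℕ := P.sup List.length

/-- `P` is a complete prefix set (CPS): it is a prefix set (no word of `P` is a prefix of
another word of `P`) and every word of length at least `|P|` has a prefix in `P`. -/
def IsCPS (P : Finset (List Bool)) : Prop :=
  (∀ p ∈ P, ∀ q ∈ P, p <+: q → p = q) ∧
  (∀ x : List Bool, maxLen P ≤ x.length → ∃ p ∈ P, p <+: x)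

/-- Irreducibility of a tree-shift: any two `n`-blocks `u, v` of `X` can be realized in a
single tree of `X`, with `u` rooted at `ε` and `v` rooted at every word of a CPS whose
words have length at least `n`. -/
def IrreducibleTS {A : Type*} (X : Set (InfTree A)) : Prop :=
  ∀ n : ℕ, 0 < n → ∀ u v : List Bool → A, memBlocks X n u → memBlocks X n v →
    ∃ t ∈ X, ∃ P : Finset (List Bool), IsCPS P ∧ (∀ x ∈ P, n ≤ x.length) ∧
      blockEqAt t [] n u ∧ ∀ x ∈ P, blockEqAt t x n v

/-- Mixing for tree-shifts: there are two CPS `P_0, P_1` connecting any two blocks, the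
choice of the CPS being governed by the last letter `w_{n-1}` of `w ∈ Σ^{n-1}`. -/
def MixingTS {A : Type*} (X : Set (InfTree A)) : Prop :=
  ∃ P0 P1 : Finset (List Bool), IsCPS P0 ∧ IsCPS P1 ∧
    ∀ n m : ℕ, 0 < n → 0 < m → ∀ u v : List Bool → A,
      memBlocks X n u → memBlocks X m v →
      ∃ t ∈ X, blockEqAt t [] n u ∧
        ∀ w : List Bool, w.length = n - 1 → ∀ b : Bool, w.getLast? = some b →
          ∀ x ∈ (if b then P1 else P0), blockEqAt t (w ++ x) m v

/-- A periodic tree: `σ_x t = t` for all `x` in some complete prefix set. -/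
def IsPeriodicTree {A : Type*} (t : InfTree A) : Prop :=
  ∃ P : Finset (List Bool), IsCPS P ∧ ∀ x ∈ P, treeShift x t = t

/-- The metric on trees: `d(t,t') = 2^{-n}` where `n` is the least length of a
disagreement, and `d(t,t') = 0` if `t = t'`. -/
noncomputable def treeDist {A : Type*} (t t' : InfTree A) : ℝ :=
  haveI := Classical.propDecidable (t = t')
  if t = t' then 0
  else (2⁻¹ : ℝ) ^ sInf { n : ℕ | ∃ x : List Bool, x.length = n ∧ t x ≠ t' x }

/-- `U` is an open subset of `X` in the topology induced by the metric `treeDist`. -/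
def IsOpenIn {A : Type*} (X U : Set (InfTree A)) : Prop :=
  U ⊆ X ∧ ∀ t ∈ U, ∃ ε : ℝ, 0 < ε ∧ ∀ t' ∈ X, treeDist t t' < ε → t' ∈ U

/-- The `m`-block of `t` rooted at `x`, as a function on `Σ_{m-1}`. -/
def blockFun {A : Type*} (m : ℕ) (t : InfTree A) (x : List Bool) :
    { y : List Bool // y.length < m } → A :=
  fun y => t (x ++ y.1)

/-- `φ` is a sliding block code on `X`: it is induced by a local `m`-block map `Φ`. -/
def IsSlidingBlockCode {A B : Type*} (X : Set (InfTree A)) (φ : InfTree A → InfTree B) : Prop :=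
  ∃ m : ℕ, 0 < m ∧ ∃ Φ : ({ y : List Bool // y.length < m } → A) → B,
    ∀ t ∈ X, ∀ x : List Bool, φ t x = Φ (blockFun m t x)

/-- `φ` is a conjugacy from `X` onto `Y`: an invertible sliding block code whose inverse
is also a sliding block code. -/
def IsConjugacy {A B : Type*} (X : Set (InfTree A)) (Y : Set (InfTree B))
    (φ : InfTree A → InfTree B) : Prop :=
  IsSlidingBlockCode X φ ∧ Set.MapsTo φ X Y ∧
    ∃ ψ : InfTree B → InfTree A, IsSlidingBlockCode Y ψ ∧ Set.MapsTo ψ Y X ∧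
      (∀ t ∈ X, ψ (φ t) = t) ∧ (∀ s ∈ Y, φ (ψ s) = s)

/-- The `m`-th higher block code `φ_m`, sending `t` to the tree of `m`-blocks of `t`. -/
def higherBlockMap {A : Type*} (m : ℕ) (t : InfTree A) :
    InfTree ({ y : List Bool // y.length < m } → A) :=
  fun x => blockFun m t x

/-- The vertex tree-shift determined by two transition matrices `A_0, A_1`. -/
def vertexTreeShift {n : ℕ} (A0 A1 : Matrix (Fin n) (Fin n) ℕ) : Set (InfTree (Fin n)) :=
  { t | ∀ x : List Bool,
      A0 (t x) (t (x ++ [false])) = 1 ∧ A1 (t x) (t (x ++ [true])) = 1 }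

/-- `A_x = A_{x_l} A_{x_{l-1}} ⋯ A_{x_1}` for a word `x = x_1 … x_l`. -/
def matWord {n : ℕ} (A0 A1 : Matrix (Fin n) (Fin n) ℕ) :
    List Bool → Matrix (Fin n) (Fin n) ℕ
  | [] => 1
  | b :: rest => matWord A0 A1 rest * (if b then A1 else A0)

/-- A 0-1 matrix. -/
def ZeroOne {n : ℕ} (M : Matrix (Fin n) (Fin n) ℕ) : Prop := ∀ i j, M i j ≤ 1

/-- The graph representation of the pair `(A_0, A_1)` is essential: every row and every
column of each matrix contains a nonzero entry. -/
def EssentialPair {n : ℕ} (A0 A1 : Matrix (Fin n) (Fin n) ℕ) : Prop :=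
  (∀ i, ∃ j, 0 < A0 i j) ∧ (∀ j, ∃ i, 0 < A0 i j) ∧
  (∀ i, ∃ j, 0 < A1 i j) ∧ (∀ j, ∃ i, 0 < A1 i j)

/-- An irreducible nonnegative matrix. -/
def MatIrreducible {n : ℕ} (A : Matrix (Fin n) (Fin n) ℕ) : Prop :=
  ∀ i j, ∃ k : ℕ, 1 ≤ k ∧ 0 < (A ^ k) i j

/-- A primitive nonnegative matrix. -/
def MatPrimitive {n : ℕ} (A : Matrix (Fin n) (Fin n) ℕ) : Prop :=
  ∃ k : ℕ, 1 ≤ k ∧ ∀ i j, 0 < (A ^ k) i j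

/-- `V_w`: the set of possible terminal states of the labeled path `w`. -/
def Vset {n : ℕ} (M : Matrix (Fin n) (Fin n) ℕ) : Set (Fin n) := { j | ∃ i, 0 < M i j }

/-- A cycle: a word `w = w_1 … w_k` with `k ≥ 2`, `w_k = w_1` and `V_w = V_{w_1}`. -/
def IsCycle {n : ℕ} (A0 A1 : Matrix (Fin n) (Fin n) ℕ) (w : List Bool) : Prop :=
  2 ≤ w.length ∧ w.getLast? = w.head? ∧
    Vset (matWord A0 A1 w) = Vset (matWord A0 A1 (w.take 1))


section AuxVTS

/-- Vertex tree-shifts are invariant under the shift maps. -/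
lemma treeShift_mem_vertexTreeShift {n : ℕ} {A0 A1 : Matrix (Fin n) (Fin n) ℕ}
    {t : InfTree (Fin n)} (ht : t ∈ vertexTreeShift A0 A1) (w : List Bool) :
    treeShift w t ∈ vertexTreeShift A0 A1 := by
  intro x
  have h := ht (w ++ x)
  simpa [treeShift, List.append_assoc] using h

/-- From a positive entry of a matrix power, extract a chain of positive steps. -/
lemma exists_chain_of_pow_pos {n : ℕ} (B : Matrix (Fin n) (Fin n) ℕ) :
    ∀ (k : ℕ) (i j : Fin n), 0 < (B ^ k) i j →
      ∃ f : ℕ → Fin n, f 0 = i ∧ f k = j ∧ ∀ m, m < k → 0 < B (f m) (f (m + 1)) := by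
  intro k
  induction k with
  | zero =>
    intro i j hij
    have hij' : i = j := by
      by_contra hne
      rw [pow_zero, Matrix.one_apply_ne hne] at hij
      exact lt_irrefl 0 hij
    exact ⟨fun _ => i, rfl, hij' ▸ rfl, fun m hm => absurd hm (by omega)⟩
  | succ k ih =>
    intro i j hij
    rw [pow_succ, Matrix.mul_apply] at hij
    have hex : ∃ c : Fin n, 0 < (B ^ k) i c * B c j := by
      by_contra hc
      push_neg at hc
      have hz : (∑ c, (B ^ k) i c * B c j) = 0 :=
        Finset.sum_eq_zero fun c _ => Nat.le_zero.mp (hc c)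
      rw [hz] at hij; exact lt_irrefl 0 hij
    obtain ⟨c, hc⟩ := hex
    have h1 : 0 < (B ^ k) i c := Nat.pos_of_ne_zero fun h => by simp [h] at hc
    have h2 : 0 < B c j := Nat.pos_of_ne_zero fun h => by simp [h] at hc
    obtain ⟨f, hf0, hfk, hfs⟩ := ih i c h1
    refine ⟨fun m => if m ≤ k then f m else j, by simp [hf0], by simp, ?_⟩
    intro m hm
    rcases Nat.lt_or_ge m k with h | h
    · simp only [if_pos h.le, if_pos (by omega : m + 1 ≤ k)]
      exact hfs m h
    · have hmk : m = k := by omega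
      subst hmk
      simp only [le_refl, if_pos, if_neg (by omega : ¬ m + 1 ≤ m)]
      rw [hfk]; exact h2

/-- The finite set of words over `{0,1}` of a given length. -/
def wordsOfLen : ℕ → Finset (List Bool)
  | 0 => {[]}
  | k + 1 => (wordsOfLen k).image (List.cons false) ∪ (wordsOfLen k).image (List.cons true)

lemma mem_wordsOfLen : ∀ (k : ℕ) (x : List Bool), x ∈ wordsOfLen k ↔ x.length = k
  | 0, x => by simp [wordsOfLen, List.length_eq_zero_iff]
  | k + 1, x => by
    cases x with
    | nil => simp [wordsOfLen]
    | cons b y =>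
      cases b <;> simp [wordsOfLen, mem_wordsOfLen k]

end AuxVTS

/-- if one transition matrix is irreducible and is dominated by the other,
the (essential) vertex tree-shift is irreducible. -/
theorem vertexTreeShift_irreducible_of_le {n : ℕ}
    (A0 A1 : Matrix (Fin n) (Fin n) ℕ) (h0 : ZeroOne A0) (h1 : ZeroOne A1)
    (hess : EssentialPair A0 A1)
    (h : (MatIrreducible A0 ∧ ∀ i j, A0 i j ≤ A1 i j) ∨
         (MatIrreducible A1 ∧ ∀ i j, A1 i j ≤ A0 i j)) :
    IrreducibleTS (vertexTreeShift A0 A1) := by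
  -- Unify the two cases: a matrix `B`, irreducible, whose positive entries are
  -- transitions allowed by both `A0` and `A1`.
  obtain ⟨B, hBirr, hB0, hB1⟩ :
      ∃ B : Matrix (Fin n) (Fin n) ℕ, MatIrreducible B ∧
        (∀ i j, 0 < B i j → A0 i j = 1) ∧ (∀ i j, 0 < B i j → A1 i j = 1) := by
    rcases h with ⟨hirr, hle⟩ | ⟨hirr, hle⟩
    · exact ⟨A0, hirr, fun i j hij => le_antisymm (h0 i j) hij,
        fun i j hij => le_antisymm (h1 i j) (lt_of_lt_of_le hij (hle i j))⟩
    · exact ⟨A1, hirr, fun i j hij => le_antisymm (h0 i j) (lt_of_lt_of_le hij (hle i j)),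
        fun i j hij => le_antisymm (h1 i j) hij⟩
  intro m hm u v hu hv
  obtain ⟨tu, htu, xu, hbu⟩ := hu
  obtain ⟨tv, htv, xv, hbv⟩ := hv
  set su : InfTree (Fin n) := treeShift xu tu with hsu
  set sv : InfTree (Fin n) := treeShift xv tv with hsv
  have hsuX : su ∈ vertexTreeShift A0 A1 := treeShift_mem_vertexTreeShift htu xu
  have hsvX : sv ∈ vertexTreeShift A0 A1 := treeShift_mem_vertexTreeShift htv xv
  have hsub : ∀ y : List Bool, y.length < m → su y = u y := fun y hy => hbu y hy
  have hsvb : ∀ z : List Bool, z.length < m → sv z = v z := fun z hz => hbv z hz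
  set b : Fin n := sv [] with hb
  choose K hK1 hKpos using fun a : Fin n => hBirr a b
  choose f hf0 hfk hfstep using fun a : Fin n =>
    exists_chain_of_pow_pos B (K a) a b (hKpos a)
  have hstep0 : ∀ (a : Fin n) (j : ℕ), j < K a → A0 (f a j) (f a (j + 1)) = 1 :=
    fun a j hj => hB0 _ _ (hfstep a j hj)
  have hstep1 : ∀ (a : Fin n) (j : ℕ), j < K a → A1 (f a j) (f a (j + 1)) = 1 :=
    fun a j hj => hB1 _ _ (hfstep a j hj)
  -- the depth beyond which we glue in copies of `sv`
  set D : List Bool → ℕ := fun x => m - 1 + K (su (x.take (m - 1))) with hD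
  have hDdef : ∀ x : List Bool, D x = m - 1 + K (su (x.take (m - 1))) := fun x => by
    simp only [hD]
  -- the connecting tree
  set t : InfTree (Fin n) := fun x =>
    if x.length < m - 1 then su x
    else if x.length < D x then f (su (x.take (m - 1))) (x.length - (m - 1))
    else sv (x.drop (D x)) with ht
  have htlow : ∀ x : List Bool, x.length < m - 1 → t x = su x := by
    intro x hx; simp only [ht]; rw [if_pos hx]
  have htmid : ∀ x : List Bool, m - 1 ≤ x.length → x.length < D x →
      t x = f (su (x.take (m - 1))) (x.length - (m - 1)) := by
    intro x h1 h2; simp only [ht]; rw [if_neg (by omega), if_pos h2]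
  have hthigh : ∀ x : List Bool, D x ≤ x.length → t x = sv (x.drop (D x)) := by
    intro x h1
    have hmle : m - 1 ≤ D x := by rw [hDdef]; omega
    simp only [ht]; rw [if_neg (by omega), if_neg (by omega)]
  have htat : ∀ x : List Bool, x.length = m - 1 → t x = su x := by
    intro x hx
    have h2 : x.length < D x := by
      rw [hDdef]; have := hK1 (su (x.take (m - 1))); omega
    rw [htmid x hx.ge h2]
    have h0' : x.length - (m - 1) = 0 := by omega
    have htx : x.take (m - 1) = x := List.take_of_length_le hx.le
    rw [h0', htx, hf0]
  have htsu : ∀ x : List Bool, x.length ≤ m - 1 → t x = su x := by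
    intro x hx
    rcases lt_or_eq_of_le hx with h | h
    · exact htlow x h
    · exact htat x h
  -- the connecting tree belongs to the shift
  have htX : t ∈ vertexTreeShift A0 A1 := by
    intro x
    rcases Nat.lt_or_ge x.length (m - 1) with hx | hx
    · have hx' : ∀ i : Bool, t (x ++ [i]) = su (x ++ [i]) := by
        intro i; apply htsu; simp; omega
      rw [htlow x hx, hx' false, hx' true]
      exact hsuX x
    · rcases Nat.lt_or_ge x.length (D x) with hx2 | hx2
      · -- path region
        have hjK : x.length - (m - 1) < K (su (x.take (m - 1))) := by
          rw [hDdef] at hx2; omega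
        have hxval : t x = f (su (x.take (m - 1))) (x.length - (m - 1)) := htmid x hx hx2
        have hchild : ∀ i : Bool,
            t (x ++ [i]) = f (su (x.take (m - 1))) (x.length - (m - 1) + 1) := by
          intro i
          have htake : (x ++ [i]).take (m - 1) = x.take (m - 1) :=
            List.take_append_of_le_length hx
          have hDeq : D (x ++ [i]) = D x := by rw [hDdef, hDdef, htake]
          rcases Nat.lt_or_ge ((x ++ [i]).length) (D x) with h3 | h3
          · rw [htmid (x ++ [i]) (by simp; omega) (by rw [hDeq]; exact h3), htake]
            congr 1
            simp; omega
          · have hlen : x.length + 1 = D x := by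
              simp only [List.length_append, List.length_cons, List.length_nil] at h3
              omega
            rw [hthigh (x ++ [i]) (by rw [hDeq]; simp; omega), hDeq]
            have hdrop : (x ++ [i]).drop (D x) = [] := by
              rw [List.drop_eq_nil_iff]; simp; omega
            rw [hdrop]
            have hjKa : x.length - (m - 1) + 1 = K (su (x.take (m - 1))) := by
              rw [hDdef] at hlen; omega
            rw [hjKa, hfk]
        constructor
        · rw [hxval, hchild false]; exact hstep0 _ _ hjK
        · rw [hxval, hchild true]; exact hstep1 _ _ hjK
      · -- sv region
        have htake : ∀ i : Bool, (x ++ [i]).take (m - 1) = x.take (m - 1) :=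
          fun i => List.take_append_of_le_length hx
        have hDeq : ∀ i : Bool, D (x ++ [i]) = D x := fun i => by
          rw [hDdef, hDdef, htake]
        have hxval : t x = sv (x.drop (D x)) := hthigh x hx2
        have hchild : ∀ i : Bool, t (x ++ [i]) = sv (x.drop (D x) ++ [i]) := by
          intro i
          rw [hthigh (x ++ [i]) (by rw [hDeq]; simp; omega), hDeq,
            List.drop_append_of_le_length hx2]
        rw [hxval, hchild false, hchild true]
        exact hsvX (x.drop (D x))
  -- the complete prefix set
  set Kmax := Finset.univ.sup K with hKmax
  set N := m - 1 + Kmax with hN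
  set P : Finset (List Bool) :=
    ((Finset.range (N + 1)).biUnion wordsOfLen).filter
      (fun x => x.length = m - 1 + K (su (x.take (m - 1)))) with hP
  have hmemP : ∀ x : List Bool, x ∈ P ↔ x.length = m - 1 + K (su (x.take (m - 1))) := by
    intro x
    simp only [hP, Finset.mem_filter, Finset.mem_biUnion, Finset.mem_range, mem_wordsOfLen]
    constructor
    · rintro ⟨_, h⟩; exact h
    · intro hx
      refine ⟨⟨x.length, ?_, rfl⟩, hx⟩
      have hk : K (su (x.take (m - 1))) ≤ Kmax := Finset.le_sup (Finset.mem_univ _)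
      omega
  have hrep : ∀ w : List Bool, w.length = m - 1 →
      (w ++ List.replicate (K (su w)) false) ∈ P := by
    intro w hw
    rw [hmemP]
    have htk : (w ++ List.replicate (K (su w)) false).take (m - 1) = w := by
      rw [← hw, List.take_left]
    rw [htk]
    simp [hw]
  refine ⟨t, htX, P, ⟨?_, ?_⟩, ?_, ?_, ?_⟩
  · -- prefix set
    intro p hp q hq hpq
    rw [hmemP] at hp hq
    have hple : m - 1 ≤ p.length := by omega
    have hpt : p = q.take p.length := List.prefix_iff_eq_take.mp hpq
    have htake : p.take (m - 1) = q.take (m - 1) := by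
      rw [hpt, List.take_take, min_eq_left hple]
    have hlen : p.length = q.length := by rw [hp, hq, htake]
    exact hpq.eq_of_length hlen
  · -- completeness
    intro x hx
    have hm1 : m - 1 ≤ maxLen P := by
      have h1 := hrep (List.replicate (m - 1) false) (by simp)
      calc m - 1 ≤ (List.replicate (m - 1) false
            ++ List.replicate (K (su (List.replicate (m - 1) false))) false).length := by
              simp
        _ ≤ maxLen P := Finset.le_sup h1
    have hxm : m - 1 ≤ x.length := le_trans hm1 hx
    have hwlen : (x.take (m - 1)).length = m - 1 := by
      rw [List.length_take]; omega
    have hq := hrep (x.take (m - 1)) hwlen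
    have hqlen : m - 1 + K (su (x.take (m - 1))) ≤ maxLen P := by
      have h2 : (x.take (m - 1) ++ List.replicate (K (su (x.take (m - 1)))) false).length
          ≤ maxLen P := Finset.le_sup hq
      simp only [List.length_append, List.length_replicate, hwlen] at h2
      exact h2
    refine ⟨x.take (m - 1 + K (su (x.take (m - 1)))), ?_, List.take_prefix _ _⟩
    rw [hmemP]
    have hlen : (x.take (m - 1 + K (su (x.take (m - 1))))).length
        = m - 1 + K (su (x.take (m - 1))) := by
      rw [List.length_take]; omega
    have htt : (x.take (m - 1 + K (su (x.take (m - 1))))).take (m - 1) = x.take (m - 1) := by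
      rw [List.take_take, min_eq_left (by omega : m - 1 ≤ m - 1 + K (su (x.take (m - 1))))]
    rw [hlen, htt]
  · -- all words of P have length at least m
    intro x hxP
    rw [hmemP] at hxP
    have := hK1 (su (x.take (m - 1)))
    omega
  · -- the block u at the root
    intro y hy
    simp only [List.nil_append]
    rcases Nat.lt_or_ge y.length (m - 1) with hyl | hyl
    · rw [htlow y hyl]; exact hsub y hy
    · have hyl' : y.length = m - 1 := by omega
      rw [htat y hyl']; exact hsub y hy
  · -- the block v at every word of P
    intro x hxP z hz
    rw [hmemP] at hxP
    have htake : (x ++ z).take (m - 1) = x.take (m - 1) :=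
      List.take_append_of_le_length (by omega)
    have hDxz : D (x ++ z) = x.length := by rw [hDdef, htake]; omega
    have hge : D (x ++ z) ≤ (x ++ z).length := by rw [hDxz]; simp
    rw [hthigh (x ++ z) hge, hDxz, List.drop_left]
    exact hsvb z hz
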